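/- arXiv:2412.10602 — 2 statements merged into one kernel-verified Lean document; each statement's English description precedes it below -/
import Mathlib

section
/- Let A = (a_{ij}) ∈ (𝕊max^∨)^{n×n} be TPSD and let |A| ∈ (𝕋max)^{n×n} be its entrywise modulus. Then the multiset of 𝕋max-algebraic eigenvalues of |A|, counted with multiplicities, equals the multiset of diagonal entries {|a_{11}|, …, |a_{nn}|}. -/
/-!
Common framework: the symmetrized tropical semiring 𝕊max over a linearly
ordered abelian group Γ, represented concretely: an element is either 𝟘
(represented by `none`) or a pair of a modulus `c : Γ` and a sign
(positive, negative or balanced), matching the classes of the quotient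
𝕋max²/ℛ described in the paper.
-/

namespace TropPaper

inductive SSign : Type
  | pos
  | neg
  | bal
  deriving DecidableEq

/-- The symmetrized tropical semiring 𝕊max(Γ): `none` is 𝟘, and
`some (c, s)` is the class of modulus `c` and sign `s`. -/
def Smax (Γ : Type) : Type := Option (Γ × SSign)

/-- Γ is divisible. -/
def DivisibleGrp (Γ : Type) [AddCommGroup Γ] : Prop :=
  ∀ k : ℕ, 0 < k → ∀ a : Γ, ∃ b : Γ, k • b = a

section Defs

variable {Γ : Type} [AddCommGroup Γ] [LinearOrder Γ] [IsOrderedAddMonoid Γ]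

/-- 𝟘 -/
def szero : Smax Γ := none

/-- 𝟙 -/
def sone : Smax Γ := some ((0 : Γ), SSign.pos)

/-- modulus |·| : 𝕊max → 𝕋max = WithBot Γ -/
def smod : Smax Γ → WithBot Γ
  | none => ⊥
  | some (c, _) => (c : WithBot Γ)

def sgnMul : SSign → SSign → SSign
  | SSign.pos, t => t
  | SSign.neg, SSign.pos => SSign.neg
  | SSign.neg, SSign.neg => SSign.pos
  | SSign.neg, SSign.bal => SSign.bal
  | SSign.bal, _ => SSign.bal

/-- ⊕ on 𝕊max -/
def sadd : Smax Γ → Smax Γ → Smax Γ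
  | none, b => b
  | some a, none => some a
  | some (c, s), some (d, t) =>
      if c < d then some (d, t)
      else if d < c then some (c, s)
      else some (c, if s = t then s else SSign.bal)

/-- ⊖ (unary) on 𝕊max -/
def sneg : Smax Γ → Smax Γ
  | none => none
  | some (c, SSign.pos) => some (c, SSign.neg)
  | some (c, SSign.neg) => some (c, SSign.pos)
  | some (c, SSign.bal) => some (c, SSign.bal)

/-- ⊙ on 𝕊max -/
def smul : Smax Γ → Smax Γ → Smax Γ
  | none, _ => none
  | some _, none => none
  | some (c, s), some (d, t) => some (c + d, sgnMul s t)

/-- a ⊖ b -/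
def ssub (a b : Smax Γ) : Smax Γ := sadd a (sneg b)

/-- a° = a ⊖ a -/
def sbal (a : Smax Γ) : Smax Γ := ssub a a

/-- the positive element with the same modulus (|·| seen inside 𝕊max⊕) -/
def sabs : Smax Γ → Smax Γ
  | none => none
  | some (c, _) => some (c, SSign.pos)

/-- multiplicative inverse (of invertible, i.e. signed nonzero, elements) -/
def sinv : Smax Γ → Smax Γ
  | none => none
  | some (c, s) => some (-c, s)

/-- a^{⊙k} -/
def spow (a : Smax Γ) : ℕ → Smax Γ
  | 0 => sone
  | k + 1 => smul a (spow a k)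

/-- membership in 𝕊max° (balanced elements together with 𝟘) -/
def IsBal : Smax Γ → Prop
  | none => True
  | some (_, s) => s = SSign.bal

/-- membership in 𝕊max⊕ (positive elements together with 𝟘) -/
def IsPos : Smax Γ → Prop
  | none => True
  | some (_, s) => s = SSign.pos

/-- membership in 𝕊max^∨ (signed elements) -/
def IsSigned : Smax Γ → Prop
  | none => True
  | some (_, s) => s ≠ SSign.bal

/-- the balance relation a ∇ b -/
def Balance (a b : Smax Γ) : Prop := IsBal (ssub a b)

/-- a ⪯ b -/
def natLe (a b : Smax Γ) : Prop := sadd a b = b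

/-- a ≤ b :⟺ b ⊖ a ∈ 𝕊max⊕ ∪ 𝕊max° -/
def sle (a b : Smax Γ) : Prop := IsPos (ssub b a) ∨ IsBal (ssub b a)

/-- a < b :⟺ b ⊖ a ∈ 𝕊max⊕ ∖ {𝟘} -/
def slt (a b : Smax Γ) : Prop := IsPos (ssub b a) ∧ ssub b a ≠ szero

/-- finite ⊕-sum over a list -/
def sumS {α : Type} (l : List α) (f : α → Smax Γ) : Smax Γ :=
  (l.map f).foldr sadd szero

/-- finite ⊙-product over a list -/
def prodS {α : Type} (l : List α) (f : α → Smax Γ) : Smax Γ :=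
  (l.map f).foldr smul sone

/-- the zero vector -/
def zeroVecS {n : ℕ} : Fin n → Smax Γ := fun _ => szero

def VecSigned {n : ℕ} (x : Fin n → Smax Γ) : Prop := ∀ i, IsSigned (x i)

def MatSigned {n : ℕ} (A : Matrix (Fin n) (Fin n) (Smax Γ)) : Prop :=
  ∀ i j, IsSigned (A i j)

def SymmS {n : ℕ} (A : Matrix (Fin n) (Fin n) (Smax Γ)) : Prop :=
  ∀ i j, A i j = A j i

/-- A ⊙ v -/
def matVecS {n : ℕ} (A : Matrix (Fin n) (Fin n) (Smax Γ)) (v : Fin n → Smax Γ) :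
    Fin n → Smax Γ :=
  fun i => sumS (List.finRange n) fun j => smul (A i j) (v j)

/-- A ⊙ B -/
def matMulS {n : ℕ} (A B : Matrix (Fin n) (Fin n) (Smax Γ)) :
    Matrix (Fin n) (Fin n) (Smax Γ) :=
  Matrix.of fun i j => sumS (List.finRange n) fun l => smul (A i l) (B l j)

/-- the identity matrix I -/
def idMatS {n : ℕ} : Matrix (Fin n) (Fin n) (Smax Γ) :=
  Matrix.of fun i j => if i = j then sone else szero

/-- xᵀ ⊙ A ⊙ x -/
def quadFormS {n : ℕ} (A : Matrix (Fin n) (Fin n) (Smax Γ)) (x : Fin n → Smax Γ) :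
    Smax Γ :=
  sumS (List.finRange n) fun i => sumS (List.finRange n) fun j =>
    smul (x i) (smul (A i j) (x j))

/-- tropical positive definiteness (the quadratic-form condition) -/
def TPD {n : ℕ} (A : Matrix (Fin n) (Fin n) (Smax Γ)) : Prop :=
  ∀ x : Fin n → Smax Γ, VecSigned x → x ≠ zeroVecS → slt szero (quadFormS A x)

/-- tropical positive semidefiniteness -/
def TPSD {n : ℕ} (A : Matrix (Fin n) (Fin n) (Smax Γ)) : Prop :=
  ∀ x : Fin n → Smax Γ, VecSigned x → x ≠ zeroVecS → sle szero (quadFormS A x)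

/-- sgn(π) ∈ {𝟙, ⊖𝟙} -/
def permSignS {n : ℕ} (π : Equiv.Perm (Fin n)) : Smax Γ :=
  if (Equiv.Perm.sign π : ℤ) = 1 then sone else sneg sone

/-- the determinant over 𝕊max -/
noncomputable def detS {n : ℕ} (M : Matrix (Fin n) (Fin n) (Smax Γ)) : Smax Γ :=
  sumS (Finset.univ : Finset (Equiv.Perm (Fin n))).toList fun π =>
    smul (permSignS π) (prodS (List.finRange n) fun i => M i (π i))

/-- the adjugate matrix over 𝕊max -/
noncomputable def adjS {n : ℕ} (M : Matrix (Fin (n+1)) (Fin (n+1)) (Smax Γ)) :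
    Matrix (Fin (n+1)) (Fin (n+1)) (Smax Γ) :=
  Matrix.of fun i j =>
    smul (spow (sneg sone) (i.val + j.val))
      (detS (Matrix.of fun a b : Fin n => M (Fin.succAbove j a) (Fin.succAbove i b)))

/-- γ ⊙ I ⊖ A -/
def charMatS {n : ℕ} (γ : Smax Γ) (A : Matrix (Fin n) (Fin n) (Smax Γ)) :
    Matrix (Fin n) (Fin n) (Smax Γ) :=
  Matrix.of fun i j => ssub (smul γ (idMatS i j)) (A i j)

/-- tr_k(A) = ⊕_{|K| = k} det(A[K,K]) -/
noncomputable def trkS {n : ℕ} (k : ℕ) (A : Matrix (Fin n) (Fin n) (Smax Γ)) : Smax Γ :=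
  sumS ((Finset.univ : Finset (Fin n)).powersetCard k).attach.toList fun K =>
    detS (Matrix.of fun a b : Fin k =>
      A (K.1.orderEmbOfFin (Finset.mem_powersetCard.mp K.2).2 a)
        (K.1.orderEmbOfFin (Finset.mem_powersetCard.mp K.2).2 b))

/-- matrix power A^{⊙k} -/
def matPowS {n : ℕ} (A : Matrix (Fin n) (Fin n) (Smax Γ)) :
    ℕ → Matrix (Fin n) (Fin n) (Smax Γ)
  | 0 => idMatS
  | k + 1 => matMulS A (matPowS A k)

/-- partial Kleene sums I ⊕ A ⊕ ⋯ ⊕ A^{⊙m} -/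
def starPartialS {n : ℕ} (A : Matrix (Fin n) (Fin n) (Smax Γ)) (m : ℕ) :
    Matrix (Fin n) (Fin n) (Smax Γ) :=
  Matrix.of fun i j => sumS (List.range (m+1)) fun k => matPowS A k i j

/-- the diagonal matrix D^(k) with diagonal (γ₁,…,γ_{k−1},𝟘,…,𝟘) (0-based k) -/
def DmatS {n : ℕ} (A : Matrix (Fin n) (Fin n) (Smax Γ)) (k : Fin n) :
    Matrix (Fin n) (Fin n) (Smax Γ) :=
  Matrix.of fun i j => if i = j ∧ i < k then A i i else szero

/-- the complementary matrix A^(k) -/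
def AmatS {n : ℕ} (A : Matrix (Fin n) (Fin n) (Smax Γ)) (k : Fin n) :
    Matrix (Fin n) (Fin n) (Smax Γ) :=
  Matrix.of fun i j => if i ≠ j ∨ k ≤ i then A i j else szero

/-- M = (γ⊙I ⊖ D^(k))^{⊙−1} ⊙ A^(k) -/
def MmatS {n : ℕ} (A : Matrix (Fin n) (Fin n) (Smax Γ)) (k : Fin n) :
    Matrix (Fin n) (Fin n) (Smax Γ) :=
  Matrix.of fun i j =>
    smul (sinv (if i < k then sneg (A i i) else A k k)) (AmatS A k i j)

/-- λ_k = (⊖𝟙)^{⊙(k−1)} ⊙ γ₁ ⊙ ⋯ ⊙ γ_{k−1} ⊙ γ^{⊙(n−k)} (0-based k, size n) -/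
def lamkS {n : ℕ} (A : Matrix (Fin n) (Fin n) (Smax Γ)) (k : Fin n) : Smax Γ :=
  smul (spow (sneg sone) k.val)
    (smul (prodS ((List.finRange n).filter (fun i => i < k)) fun i => A i i)
      (spow (A k k) (n - 1 - k.val)))

/-- irreducibility: the digraph of nonzero entries is strongly connected -/
def IrreducibleS {n : ℕ} (A : Matrix (Fin n) (Fin n) (Smax Γ)) : Prop :=
  ∀ i j : Fin n, Relation.ReflTransGen (fun a b => A a b ≠ szero) i j

/-- diagonal entries sorted non-increasingly for ⪯ -/
def DiagSortedS {n : ℕ} (A : Matrix (Fin n) (Fin n) (Smax Γ)) : Prop :=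
  ∀ i j : Fin n, i ≤ j → natLe (A j j) (A i i)

/-! 𝕋max-side notions (for the characteristic polynomial of |A|). -/

/-- finite max over a list in 𝕋max -/
def sumT {α : Type} (l : List α) (f : α → WithBot Γ) : WithBot Γ :=
  (l.map f).foldr max ⊥

/-- finite ⊙-product over a list in 𝕋max -/
def prodT {α : Type} (l : List α) (f : α → WithBot Γ) : WithBot Γ :=
  (l.map f).foldr (· + ·) (0 : WithBot Γ)

/-- the permanent over 𝕋max -/
noncomputable def perT {n : ℕ} (M : Matrix (Fin n) (Fin n) (WithBot Γ)) : WithBot Γ :=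
  sumT (Finset.univ : Finset (Equiv.Perm (Fin n))).toList fun π =>
    prodT (List.finRange n) fun i => M i (π i)

/-- coefficient of X^k in the 𝕋max-characteristic polynomial of B -/
noncomputable def charCoeffT {n : ℕ} (B : Matrix (Fin n) (Fin n) (WithBot Γ)) (k : ℕ) : WithBot Γ :=
  if k ≤ n then
    sumT ((Finset.univ : Finset (Fin n)).powersetCard (n - k)).attach.toList fun K =>
      perT (Matrix.of fun a b : Fin (n - k) =>
        B (K.1.orderEmbOfFin (Finset.mem_powersetCard.mp K.2).2 a)
          (K.1.orderEmbOfFin (Finset.mem_powersetCard.mp K.2).2 b))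
  else ⊥

/-- multiplicity of x as a 𝕋max-root of the formal polynomial of degree ≤ n
with coefficients Q: for x = ⊥ it is the lower degree, for x = c ∈ Γ it is the
difference between the largest and smallest exponents attaining
max_k (Q_k + k·c). -/
noncomputable def rootMultT (n : ℕ) (Q : ℕ → WithBot Γ) (x : WithBot Γ) : ℕ :=
  WithBot.recBotCoe
    (sInf {k | Q k ≠ ⊥})
    (fun c =>
      sSup {k | k ≤ n ∧ Q k + ((k • c : Γ) : WithBot Γ)
              = sumT (List.range (n+1)) (fun l => Q l + ((l • c : Γ) : WithBot Γ))}
        - sInf {k | k ≤ n ∧ Q k + ((k • c : Γ) : WithBot Γ)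
              = sumT (List.range (n+1)) (fun l => Q l + ((l • c : Γ) : WithBot Γ))})
    x

end Defs

/-- the signed valuation associated with a valuation v on an ordered field L -/
def svMap {Γ : Type} [AddCommGroup Γ] [LinearOrder Γ] [IsOrderedAddMonoid Γ] {L : Type} [Field L] [LinearOrder L] [IsStrictOrderedRing L]
    (v : L → WithBot Γ) (b : L) : Smax Γ :=
  if b = 0 then szero
  else if 0 < b then WithBot.recBotCoe szero (fun c => some (c, SSign.pos)) (v b)
  else WithBot.recBotCoe szero (fun c => some (c, SSign.neg)) (v b)

end TropPaper

namespace TropPaper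

section Aux

variable {Γ : Type} [AddCommGroup Γ] [LinearOrder Γ] [IsOrderedAddMonoid Γ]

/-! ### Basic lemmas about `sadd`, `smul`, `sumS` -/

lemma sadd_some_some (c d : Γ) (s t : SSign) :
    sadd (some (c, s)) (some (d, t)) =
      if c < d then some (d, t)
      else if d < c then some (c, s)
      else some (c, if s = t then s else SSign.bal) := rfl

lemma sadd_szero_right (a : Smax Γ) : sadd a szero = a := by
  cases a <;> rfl

lemma sadd_szero_left (a : Smax Γ) : sadd szero a = a := rfl

lemma sadd_comm (a b : Smax Γ) : sadd a b = sadd b a := by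
  rcases a with _ | ⟨c, s⟩
  · rcases b with _ | ⟨d, t⟩ <;> rfl
  rcases b with _ | ⟨d, t⟩
  · rfl
  rw [sadd_some_some, sadd_some_some]
  rcases lt_trichotomy c d with h | h | h
  · rw [if_pos h, if_neg (not_lt.mpr h.le), if_pos h]
  · subst h
    rw [if_neg (lt_irrefl c), if_neg (lt_irrefl c), if_neg (lt_irrefl c),
      if_neg (lt_irrefl c)]
    by_cases hst : s = t
    · subst hst; simp; rfl
    · rw [if_neg hst, if_neg (Ne.symm hst)]
  · rw [if_neg (not_lt.mpr h.le), if_pos h, if_pos h]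

lemma smod_sadd_lt_right {a b : Smax Γ} (h : smod a < smod b) : sadd a b = b := by
  rcases b with _ | ⟨d, t⟩
  · exact absurd h (by simp [smod])
  rcases a with _ | ⟨c, s⟩
  · rfl
  have hcd : c < d := by simpa [smod, WithBot.coe_lt_coe] using h
  rw [sadd_some_some, if_pos hcd]

lemma smod_sadd_lt_left {a b : Smax Γ} (h : smod b < smod a) : sadd a b = a := by
  rw [sadd_comm]; exact smod_sadd_lt_right h

lemma smul_szero_left (a : Smax Γ) : smul szero a = szero := rfl

lemma smul_szero_right (a : Smax Γ) : smul a szero = szero := by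
  cases a <;> rfl

lemma sumS_nil {α : Type} (f : α → Smax Γ) : sumS ([] : List α) f = szero := rfl

lemma sumS_cons {α : Type} (a : α) (l : List α) (f : α → Smax Γ) :
    sumS (a :: l) f = sadd (f a) (sumS l f) := rfl

lemma sumS_zero {α : Type} {l : List α} {f : α → Smax Γ}
    (h : ∀ a ∈ l, f a = szero) : sumS l f = szero := by
  induction l with
  | nil => rfl
  | cons a l ih =>
    rw [sumS_cons, h _ (List.mem_cons_self), sadd_szero_left]
    exact ih fun b hb => h b (List.mem_cons_of_mem _ hb)

lemma sumS_single {α : Type} {l : List α} {f : α → Smax Γ} {i : α}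
    (hl : l.Nodup) (hi : i ∈ l) (h : ∀ a ∈ l, a ≠ i → f a = szero) :
    sumS l f = f i := by
  induction l with
  | nil => simp at hi
  | cons a l ih =>
    rcases List.mem_cons.mp hi with rfl | hi'
    · rw [sumS_cons, sumS_zero fun b hb =>
        h b (List.mem_cons_of_mem _ hb) (fun hbi => (List.nodup_cons.mp hl).1 (hbi ▸ hb)),
        sadd_szero_right]
    · have ha : a ≠ i := fun hai => (List.nodup_cons.mp hl).1 (hai ▸ hi')
      rw [sumS_cons, h _ (List.mem_cons_self) ha, sadd_szero_left]
      exact ih (List.nodup_cons.mp hl).2 hi' fun b hb => h b (List.mem_cons_of_mem _ hb)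

lemma sumS_pair {α : Type} {l : List α} {f : α → Smax Γ} {i j : α}
    (hl : l.Nodup) (hij : i ≠ j) (hi : i ∈ l) (hj : j ∈ l)
    (h : ∀ a ∈ l, a ≠ i → a ≠ j → f a = szero) :
    sumS l f = sadd (f i) (f j) := by
  induction l with
  | nil => simp at hi
  | cons a l ih =>
    obtain ⟨hanl, hnd⟩ := List.nodup_cons.mp hl
    rcases List.mem_cons.mp hi with rfl | hi'
    · have hj' : j ∈ l := by
        rcases List.mem_cons.mp hj with rfl | h'
        · exact absurd rfl hij
        · exact h'
      rw [sumS_cons, sumS_single hnd hj' fun b hb hbj =>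
        h b (List.mem_cons_of_mem _ hb) (fun hbi => hanl (hbi ▸ hb)) hbj]
    · rcases List.mem_cons.mp hj with rfl | hj'
      · rw [sumS_cons, sumS_single hnd hi' fun b hb hbi =>
          h b (List.mem_cons_of_mem _ hb) hbi (fun hbj => hanl (hbj ▸ hb)),
          sadd_comm]
      · have ha : f a = szero :=
          h _ (List.mem_cons_self) (fun h' => hanl (h' ▸ hi')) (fun h' => hanl (h' ▸ hj'))
        rw [sumS_cons, ha, sadd_szero_left]
        exact ih hnd hi' hj' fun b hb => h b (List.mem_cons_of_mem _ hb)

lemma smod_smul (a b : Smax Γ) : smod (smul a b) = smod a + smod b := by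
  rcases a with _ | ⟨c, s⟩
  · simp [smul, smod]
  rcases b with _ | ⟨d, t⟩
  · simp [smul, smod, smul_szero_right]
  · simp [smul, smod, WithBot.coe_add]

end Aux

end TropPaper

namespace TropPaper

section Aux2

variable {Γ : Type} [AddCommGroup Γ] [LinearOrder Γ] [IsOrderedAddMonoid Γ]

/-! ### WithBot helpers -/

lemma wb_half_le {x y : WithBot Γ} (h : x + x ≤ y + y) : x ≤ y := by
  induction x using WithBot.recBotCoe with
  | bot => exact bot_le
  | coe a =>
    induction y using WithBot.recBotCoe with
    | bot =>
      exfalso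
      rw [← WithBot.coe_add] at h
      simpa using h
    | coe b =>
      rw [← WithBot.coe_add, ← WithBot.coe_add, WithBot.coe_le_coe] at h
      rw [WithBot.coe_le_coe]
      by_contra hba
      exact absurd h (not_le.mpr (add_lt_add (not_le.mp hba) (not_le.mp hba)))

lemma grp_half_lt {a b : Γ} (h : a + a < b + b) : a < b := by
  by_contra hba
  exact absurd h (not_lt.mpr (add_le_add (not_lt.mp hba) (not_lt.mp hba)))

lemma wb_coe_sum {α : Type} (s : Finset α) (F : α → Γ) :
    (∑ i ∈ s, ((F i : WithBot Γ))) = ((∑ i ∈ s, F i : Γ) : WithBot Γ) := by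
  classical
  induction s using Finset.induction_on with
  | empty => simp
  | insert a s' h ih =>
    rw [Finset.sum_insert h, Finset.sum_insert h, WithBot.coe_add, ih]

lemma wb_sum_eq_bot {α : Type} (s : Finset α) (f : α → WithBot Γ) :
    ∑ i ∈ s, f i = ⊥ ↔ ∃ i ∈ s, f i = ⊥ := by
  classical
  induction s using Finset.induction_on with
  | empty => simp
  | insert a s' h ih =>
    rw [Finset.sum_insert h, WithBot.add_eq_bot, ih]
    simp

/-! ### sumT / prodT -/

lemma sumT_nil {α : Type} (f : α → WithBot Γ) : sumT ([] : List α) f = ⊥ := rfl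

lemma sumT_cons {α : Type} (a : α) (l : List α) (f : α → WithBot Γ) :
    sumT (a :: l) f = max (f a) (sumT l f) := rfl

lemma le_sumT {α : Type} {l : List α} (f : α → WithBot Γ) {a : α} (ha : a ∈ l) :
    f a ≤ sumT l f := by
  induction l with
  | nil => simp at ha
  | cons b l ih =>
    rw [sumT_cons]
    rcases List.mem_cons.mp ha with rfl | ha'
    · exact le_max_left _ _
    · exact le_trans (ih ha') (le_max_right _ _)

lemma sumT_le {α : Type} {l : List α} {f : α → WithBot Γ} {b : WithBot Γ}
    (h : ∀ a ∈ l, f a ≤ b) : sumT l f ≤ b := by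
  induction l with
  | nil => exact bot_le
  | cons a l ih =>
    rw [sumT_cons]
    exact max_le (h a (List.mem_cons_self))
      (ih fun x hx => h x (List.mem_cons_of_mem _ hx))

lemma sumT_attain {α : Type} (l : List α) (f : α → WithBot Γ) :
    sumT l f = ⊥ ∨ ∃ a ∈ l, sumT l f = f a := by
  induction l with
  | nil => exact Or.inl rfl
  | cons a l ih =>
    rw [sumT_cons]
    rcases max_cases (f a) (sumT l f) with ⟨h1, _⟩ | ⟨h1, _⟩
    · exact Or.inr ⟨a, List.mem_cons_self, h1⟩
    · rcases ih with h | ⟨b, hb, hfb⟩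
      · exact Or.inl (h1.trans h)
      · exact Or.inr ⟨b, List.mem_cons_of_mem _ hb, h1.trans hfb⟩

lemma sumT_eq_of_mem_of_le {α : Type} {l : List α} {f : α → WithBot Γ} {a : α}
    (ha : a ∈ l) (h : ∀ b ∈ l, f b ≤ f a) : sumT l f = f a :=
  le_antisymm (sumT_le h) (le_sumT f ha)

lemma prodT_eq_sum {m : ℕ} (f : Fin m → WithBot Γ) :
    prodT (List.finRange m) f = ∑ a, f a := by
  rw [Fin.sum_univ_def, List.sum_eq_foldr]
  rfl

/-! ### the permanent of a dominated matrix -/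

lemma perT_diag {m n : ℕ} (B : Matrix (Fin n) (Fin n) (WithBot Γ))
    (H : ∀ i j, B i j + B i j ≤ B i i + B j j) (e : Fin m → Fin n) :
    perT (Matrix.of fun a b => B (e a) (e b)) = ∑ a : Fin m, B (e a) (e a) := by
  unfold perT
  have key : ∀ π : Equiv.Perm (Fin m),
      prodT (List.finRange m) (fun a => (Matrix.of fun a b => B (e a) (e b)) a (π a))
        ≤ ∑ a : Fin m, B (e a) (e a) := by
    intro π
    rw [prodT_eq_sum]
    simp only [Matrix.of_apply]
    apply wb_half_le
    calc (∑ a : Fin m, B (e a) (e (π a))) + ∑ a : Fin m, B (e a) (e (π a))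
        = ∑ a : Fin m, (B (e a) (e (π a)) + B (e a) (e (π a))) := by
          rw [Finset.sum_add_distrib]
      _ ≤ ∑ a : Fin m, (B (e a) (e a) + B (e (π a)) (e (π a))) :=
          Finset.sum_le_sum fun a _ => H (e a) (e (π a))
      _ = (∑ a : Fin m, B (e a) (e a)) + ∑ a : Fin m, B (e (π a)) (e (π a)) := by
          rw [Finset.sum_add_distrib]
      _ = (∑ a : Fin m, B (e a) (e a)) + ∑ a : Fin m, B (e a) (e a) := by
          rw [Equiv.sum_comp π (fun b => B (e b) (e b))]
  have h1 : (1 : Equiv.Perm (Fin m)) ∈ (Finset.univ : Finset (Equiv.Perm (Fin m))).toList :=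
    Finset.mem_toList.mpr (Finset.mem_univ _)
  rw [sumT_eq_of_mem_of_le h1 (fun π _ => key π)]
  rw [prodT_eq_sum]
  simp

lemma sum_emb {n m : ℕ} (K : Finset (Fin n)) (h : K.card = m) (d : Fin n → WithBot Γ) :
    ∑ a : Fin m, d (K.orderEmbOfFin h a) = ∑ i ∈ K, d i := by
  have himg : Finset.image (K.orderEmbOfFin h) Finset.univ = K := by
    apply Finset.coe_injective
    rw [Finset.coe_image, Finset.coe_univ, Set.image_univ]
    exact Finset.range_orderEmbOfFin K h
  conv_rhs => rw [← himg]
  rw [Finset.sum_image (fun a _ b _ hab => (K.orderEmbOfFin h).injective hab)]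

end Aux2

end TropPaper

namespace TropPaper

section Aux3

variable {Γ : Type} [AddCommGroup Γ] [LinearOrder Γ] [IsOrderedAddMonoid Γ]

lemma exists_pos_elt (Γ : Type) [AddCommGroup Γ] [LinearOrder Γ] [IsOrderedAddMonoid Γ] [Nontrivial Γ] :
    ∃ e : Γ, 0 < e := by
  obtain ⟨a, ha⟩ := exists_ne (0 : Γ)
  rcases ha.lt_or_gt with hpos | hneg
  · exact ⟨-a, by simpa using hpos⟩
  · exact ⟨a, hneg⟩

lemma diag_dominates {n : ℕ} [Nontrivial Γ] (hdiv : DivisibleGrp Γ)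
    (A : Matrix (Fin n) (Fin n) (Smax Γ)) (hsym : SymmS A) (hsgn : MatSigned A)
    (hTPSD : TPSD A) (i j : Fin n) :
    smod (A i j) + smod (A i j) ≤ smod (A i i) + smod (A j j) := by
  classical
  rcases eq_or_ne i j with rfl | hij
  · exact le_refl _
  by_contra hlt
  rcases h : A i j with _ | ⟨u, σ⟩
  · rw [h] at hlt
    exact hlt (by rw [show smod (none : Smax Γ) = ⊥ from rfl, WithBot.bot_add]; exact bot_le)
  have hmod : smod (A i j) = (u : WithBot Γ) := by rw [h]; rfl
  have hσ : σ ≠ SSign.bal := by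
    have := hsgn i j
    rw [h] at this
    exact this
  -- find suitable scalars t, s
  obtain ⟨t, s, h1, h2⟩ :
      ∃ t s : Γ, (∀ cii : Γ, smod (A i i) = (cii : WithBot Γ) → cii + t + t < t + s + u) ∧
        (∀ cjj : Γ, smod (A j j) = (cjj : WithBot Γ) → cjj + s + s < t + s + u) := by
    obtain ⟨e, he⟩ := exists_pos_elt Γ
    rcases hii : smod (A i i) with _ | cii
    · rcases hjj : smod (A j j) with _ | cjj
      · exact ⟨0, 0, fun c hc => absurd hc.symm WithBot.coe_ne_bot,
          fun c hc => absurd hc.symm WithBot.coe_ne_bot⟩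
      · refine ⟨cjj - u + e, 0, fun c hc => absurd hc.symm WithBot.coe_ne_bot,
          fun c hc => ?_⟩
        rw [WithBot.some_eq_coe] at hc
        have hcc : c = cjj := (WithBot.coe_injective hc).symm
        rw [hcc]
        have e2 : cjj + 0 + 0 = cjj := by abel
        have e3 : cjj - u + e + 0 + u = cjj + e := by abel
        rw [e2, e3]
        exact lt_add_of_pos_right cjj he
    · rcases hjj : smod (A j j) with _ | cjj
      · refine ⟨0, cii - u + e, fun c hc => ?_,
          fun c hc => absurd hc.symm WithBot.coe_ne_bot⟩
        rw [WithBot.some_eq_coe] at hc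
        have hcc : c = cii := (WithBot.coe_injective hc).symm
        rw [hcc]
        have e2 : cii + 0 + 0 = cii := by abel
        have e3 : 0 + (cii - u + e) + u = cii + e := by abel
        rw [e2, e3]
        exact lt_add_of_pos_right cii he
      · have hlt2 : cii + cjj < u + u := by
          rw [hmod, hii, hjj] at hlt
          rw [WithBot.some_eq_coe, WithBot.some_eq_coe] at hlt
          have h' := not_le.mp hlt
          rw [← WithBot.coe_add, ← WithBot.coe_add, WithBot.coe_lt_coe] at h'
          exact h'
        obtain ⟨t, ht⟩ := hdiv 2 (by norm_num) (cjj - cii)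
        have htt : t + t = cjj - cii := by rw [← two_nsmul]; exact ht
        refine ⟨t, 0, fun c hc => ?_, fun c hc => ?_⟩
        · rw [WithBot.some_eq_coe] at hc
          have hcc : c = cii := (WithBot.coe_injective hc).symm
          rw [hcc]
          have key : cii + t < u := grp_half_lt (by
            have e1 : cii + t + (cii + t) = cii + cii + (t + t) := by abel
            rw [e1, htt]
            have e2 : cii + cii + (cjj - cii) = cii + cjj := by abel
            rw [e2]
            exact hlt2)
          have k := add_lt_add_left key t
          have e3 : t + 0 + u = u + t := by abel
          rw [e3]
          exact k
        · rw [WithBot.some_eq_coe] at hc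
          have hcc : c = cjj := (WithBot.coe_injective hc).symm
          rw [hcc]
          have key : cjj < t + u := grp_half_lt (by
            have e1 : t + u + (t + u) = (t + t) + (u + u) := by abel
            rw [e1, htt]
            have k := add_lt_add_right hlt2 (cjj - cii)
            have e3 : cjj - cii + (cii + cjj) = cjj + cjj := by abel
            rw [e3] at k
            exact k)
          have e4 : cjj + 0 + 0 = cjj := by abel
          rw [e4]
          have e5 : t + 0 + u = t + u := by abel
          rw [e5]
          exact key
  -- the sign of the test entry at j
  set τ : SSign := if σ = SSign.pos then SSign.neg else SSign.pos with hτ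
  have hτ_ne : τ ≠ SSign.bal := by
    rw [hτ]; rcases σ with _ | _ | _ <;> simp
  have hsg1 : sgnMul SSign.pos (sgnMul σ τ) = SSign.neg := by
    rw [hτ]; rcases σ with _ | _ | _
    · rfl
    · rfl
    · exact absurd rfl hσ
  have hsg2 : sgnMul τ (sgnMul σ SSign.pos) = SSign.neg := by
    rw [hτ]; rcases σ with _ | _ | _
    · rfl
    · rfl
    · exact absurd rfl hσ
  -- the test vector
  set x : Fin n → Smax Γ :=
    (fun l => if l = i then some (t, SSign.pos) else if l = j then some (s, τ) else none)
    with hx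
  have hxi : x i = some (t, SSign.pos) := by rw [hx]; simp; rfl
  have hxj : x j = some (s, τ) := by rw [hx]; simp [Ne.symm hij]; rfl
  have hxo : ∀ l, l ≠ i → l ≠ j → x l = szero := by
    intro l hl1 hl2; rw [hx]; simp [hl1, hl2, szero]; rfl
  have hxs : VecSigned x := by
    intro l
    rcases eq_or_ne l i with rfl | hl1
    · rw [hxi]; exact SSign.noConfusion
    rcases eq_or_ne l j with rfl | hl2
    · rw [hxj]; exact hτ_ne
    · rw [hxo l hl1 hl2]; trivial
  have hxnz : x ≠ zeroVecS := by
    intro h0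
    have h0i := congrFun h0 i
    rw [hxi] at h0i
    exact Option.some_ne_none _ h0i
  -- the four relevant terms
  have hTij : smul (x i) (smul (A i j) (x j)) = some (t + (u + s), SSign.neg) := by
    rw [hxi, hxj, h]
    show some (t + (u + s), sgnMul SSign.pos (sgnMul σ τ)) = _
    rw [hsg1]
  have hTji : smul (x j) (smul (A j i) (x i)) = some (s + (u + t), SSign.neg) := by
    rw [hxj, hxi, hsym j i, h]
    show some (s + (u + t), sgnMul τ (sgnMul σ SSign.pos)) = _
    rw [hsg2]
  have hmii : smod (smul (x i) (smul (A i i) (x i))) < ((t + (u + s) : Γ) : WithBot Γ) := by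
    rw [smod_smul, smod_smul, hxi]
    show (t : WithBot Γ) + (smod (A i i) + (t : WithBot Γ)) < _
    rcases hii : smod (A i i) with _ | cii
    · show (t : WithBot Γ) + ((⊥ : WithBot Γ) + (t : WithBot Γ)) < _
      rw [WithBot.bot_add, WithBot.add_bot]
      exact WithBot.bot_lt_coe _
    · rw [WithBot.some_eq_coe] at hii
      rw [WithBot.some_eq_coe, ← WithBot.coe_add, ← WithBot.coe_add, WithBot.coe_lt_coe]
      have e1 : t + (cii + t) = cii + t + t := by abel
      have e2 : t + (u + s) = t + s + u := by abel
      rw [e1, e2]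
      exact h1 cii hii
  have hmjj : smod (smul (x j) (smul (A j j) (x j))) < ((s + (u + t) : Γ) : WithBot Γ) := by
    rw [smod_smul, smod_smul, hxj]
    show (s : WithBot Γ) + (smod (A j j) + (s : WithBot Γ)) < _
    rcases hjj : smod (A j j) with _ | cjj
    · show (s : WithBot Γ) + ((⊥ : WithBot Γ) + (s : WithBot Γ)) < _
      rw [WithBot.bot_add, WithBot.add_bot]
      exact WithBot.bot_lt_coe _
    · rw [WithBot.some_eq_coe] at hjj
      rw [WithBot.some_eq_coe, ← WithBot.coe_add, ← WithBot.coe_add, WithBot.coe_lt_coe]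
      have e1 : s + (cjj + s) = cjj + s + s := by abel
      have e2 : s + (u + t) = t + s + u := by abel
      rw [e1, e2]
      exact h2 cjj hjj
  -- the quadratic form
  have hinner_i : sumS (List.finRange n) (fun j' => smul (x i) (smul (A i j') (x j')))
      = some (t + (u + s), SSign.neg) := by
    rw [sumS_pair (List.nodup_finRange n) hij (List.mem_finRange i) (List.mem_finRange j)
      (fun a _ hai haj => by rw [hxo a hai haj, smul_szero_right, smul_szero_right])]
    rw [hTij]
    exact smod_sadd_lt_right hmii
  have hinner_j : sumS (List.finRange n) (fun j' => smul (x j) (smul (A j j') (x j')))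
      = some (s + (u + t), SSign.neg) := by
    rw [sumS_pair (List.nodup_finRange n) hij (List.mem_finRange i) (List.mem_finRange j)
      (fun a _ hai haj => by rw [hxo a hai haj, smul_szero_right, smul_szero_right])]
    rw [hTji]
    exact smod_sadd_lt_left hmjj
  have hq : quadFormS A x = some (t + (u + s), SSign.neg) := by
    unfold quadFormS
    rw [sumS_pair (List.nodup_finRange n) hij (List.mem_finRange i) (List.mem_finRange j)
      (fun a _ hai haj => sumS_zero fun b _ => by rw [hxo a hai haj, smul_szero_left])]
    rw [hinner_i, hinner_j]
    have e : s + (u + t) = t + (u + s) := by abel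
    rw [e, sadd_some_some, if_neg (lt_irrefl _), if_neg (lt_irrefl _), if_pos rfl]
  have hsle := hTPSD x hxs hxnz
  rw [hq] at hsle
  rcases hsle with hp | hb
  · exact SSign.noConfusion (show SSign.neg = SSign.pos from hp)
  · exact SSign.noConfusion (show SSign.neg = SSign.bal from hb)

end Aux3

end TropPaper

namespace TropPaper

section Aux4

variable {Γ : Type} [AddCommGroup Γ] [LinearOrder Γ] [IsOrderedAddMonoid Γ]

lemma main_aux {n : ℕ} (B : Matrix (Fin n) (Fin n) (WithBot Γ))
    (HB : ∀ i j, B i j + B i j ≤ B i i + B j j) (x : WithBot Γ) :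
    rootMultT n (charCoeffT B) x
      = (Finset.univ.filter (fun i : Fin n => B i i = x)).card := by
  classical
  have hQbot : ∀ k : ℕ, ¬ k ≤ n → charCoeffT B k = ⊥ := by
    intro k hk
    simp only [charCoeffT, if_neg hk]
  have hQle : ∀ k : ℕ, k ≤ n → ∀ K : Finset (Fin n),
      K ∈ (Finset.univ : Finset (Fin n)).powersetCard (n - k) →
      (∑ i ∈ K, B i i) ≤ charCoeffT B k := by
    intro k hk K hK
    simp only [charCoeffT, if_pos hk]
    have hmem : (⟨K, hK⟩ : {S // S ∈ (Finset.univ : Finset (Fin n)).powersetCard (n - k)}) ∈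
        ((Finset.univ : Finset (Fin n)).powersetCard (n - k)).attach.toList :=
      Finset.mem_toList.mpr (Finset.mem_attach _ _)
    refine le_trans ?_ (le_sumT _ hmem)
    rw [perT_diag B HB]
    exact le_of_eq (sum_emb K (Finset.mem_powersetCard.mp hK).2 (fun i => B i i)).symm
  have hQat : ∀ k : ℕ, k ≤ n → charCoeffT B k = ⊥ ∨
      ∃ K : Finset (Fin n), K ∈ (Finset.univ : Finset (Fin n)).powersetCard (n - k) ∧
        charCoeffT B k = ∑ i ∈ K, B i i := by
    intro k hk
    simp only [charCoeffT, if_pos hk]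
    rcases sumT_attain (((Finset.univ : Finset (Fin n)).powersetCard (n - k)).attach.toList)
      (fun K => perT (Matrix.of fun a b : Fin (n - k) =>
        B (K.1.orderEmbOfFin (Finset.mem_powersetCard.mp K.2).2 a)
          (K.1.orderEmbOfFin (Finset.mem_powersetCard.mp K.2).2 b)))
      with hbot | ⟨K, _, hKeq⟩
    · exact Or.inl hbot
    · refine Or.inr ⟨K.1, K.2, ?_⟩
      rw [hKeq, perT_diag B HB]
      exact sum_emb K.1 (Finset.mem_powersetCard.mp K.2).2 (fun i => B i i)
  induction x using WithBot.recBotCoe with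
  | bot =>
    have hshow : rootMultT n (charCoeffT B) ⊥ = sInf {k | charCoeffT B k ≠ ⊥} := rfl
    rw [hshow]
    have hmn : (Finset.univ.filter (fun i : Fin n => B i i = (⊥ : WithBot Γ))).card ≤ n := by
      refine le_trans (Finset.card_filter_le _ _) ?_
      simp
    have hfilt : (Finset.univ.filter (fun i : Fin n => ¬ B i i = (⊥ : WithBot Γ))).card
        = n - (Finset.univ.filter (fun i : Fin n => B i i = (⊥ : WithBot Γ))).card := by
      have htot := Finset.card_filter_add_card_filter_not
        (s := (Finset.univ : Finset (Fin n))) (p := fun i => B i i = (⊥ : WithBot Γ))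
      rw [Finset.card_univ, Fintype.card_fin] at htot
      omega
    have hset : {k | charCoeffT B k ≠ ⊥}
        = Set.Icc (Finset.univ.filter (fun i : Fin n => B i i = (⊥ : WithBot Γ))).card n := by
      ext k
      simp only [Set.mem_setOf_eq, Set.mem_Icc]
      constructor
      · intro hk
        have hkn : k ≤ n := by
          by_contra hkn
          exact hk (hQbot k hkn)
        refine ⟨?_, hkn⟩
        rcases hQat k hkn with hbot | ⟨K, hK, hKeq⟩
        · exact absurd hbot hk
        · have hKne : (∑ i ∈ K, B i i) ≠ ⊥ := by
            rw [← hKeq]; exact hk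
          have hsub : K ⊆ Finset.univ.filter (fun i : Fin n => ¬ B i i = (⊥ : WithBot Γ)) := by
            intro i hi
            refine Finset.mem_filter.mpr ⟨Finset.mem_univ i, ?_⟩
            intro hbi
            exact hKne ((wb_sum_eq_bot K _).mpr ⟨i, hi, hbi⟩)
          have hcard := Finset.card_le_card hsub
          have hKcard : K.card = n - k := (Finset.mem_powersetCard.mp hK).2
          rw [hKcard, hfilt] at hcard
          omega
      · rintro ⟨hmk, hkn⟩
        obtain ⟨K, hKsub, hKcard⟩ := Finset.exists_subset_card_eq
          (s := Finset.univ.filter (fun i : Fin n => ¬ B i i = (⊥ : WithBot Γ))) (n := n - k)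
          (by rw [hfilt]; omega)
        have hKmem : K ∈ (Finset.univ : Finset (Fin n)).powersetCard (n - k) :=
          Finset.mem_powersetCard.mpr ⟨Finset.subset_univ K, hKcard⟩
        have hsum_ne : (∑ i ∈ K, B i i) ≠ ⊥ := by
          intro hb
          obtain ⟨i, hi, hbi⟩ := (wb_sum_eq_bot K _).mp hb
          exact (Finset.mem_filter.mp (hKsub hi)).2 hbi
        intro hQ0
        exact hsum_ne (le_bot_iff.mp (hQ0 ▸ hQle k hkn K hKmem))
    rw [hset, csInf_Icc hmn]
  | coe c =>
    have hshow : rootMultT n (charCoeffT B) (c : WithBot Γ) =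
        sSup {k | k ≤ n ∧ charCoeffT B k + ((k • c : Γ) : WithBot Γ)
              = sumT (List.range (n+1)) (fun l => charCoeffT B l + ((l • c : Γ) : WithBot Γ))}
          - sInf {k | k ≤ n ∧ charCoeffT B k + ((k • c : Γ) : WithBot Γ)
              = sumT (List.range (n+1)) (fun l => charCoeffT B l + ((l • c : Γ) : WithBot Γ))} := rfl
    rw [hshow]
    set P := Finset.univ.filter (fun i : Fin n => (c : WithBot Γ) < B i i) with hP
    set E := Finset.univ.filter (fun i : Fin n => B i i = (c : WithBot Γ)) with hE
    have hdisj : Disjoint P E := by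
      rw [Finset.disjoint_left]
      intro a haP haE
      rw [hP] at haP
      rw [hE] at haE
      exact absurd (Finset.mem_filter.mp haE).2 (ne_of_gt (Finset.mem_filter.mp haP).2)
    have hpq : (P ∪ E).card = P.card + E.card := Finset.card_union_of_disjoint hdisj
    have hpqn : P.card + E.card ≤ n := by
      rw [← hpq]
      refine le_trans (Finset.card_le_univ _) ?_
      exact le_of_eq (Fintype.card_fin n)
    have hpn : P.card ≤ n := le_trans (Nat.le_add_right _ _) hpqn
    -- termwise bound and equality characterization
    have hmaxne : ∀ i : Fin n, max (B i i) (c : WithBot Γ) ≠ ⊥ := by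
      intro i hb
      exact WithBot.not_coe_le_bot c (hb ▸ le_max_right (B i i) (c : WithBot Γ))
    have hM'ne : (∑ i : Fin n, max (B i i) (c : WithBot Γ)) ≠ ⊥ := by
      intro hb
      obtain ⟨i, _, hbi⟩ := (wb_sum_eq_bot _ _).mp hb
      exact hmaxne i hbi
    have hKval : ∀ K : Finset (Fin n),
        (∑ i ∈ K, B i i) + (((n - K.card) • c : Γ) : WithBot Γ)
          = ∑ i : Fin n, (if i ∈ K then B i i else (c : WithBot Γ)) := by
      intro K
      rw [← Finset.sum_add_sum_compl K (fun i => if i ∈ K then B i i else (c : WithBot Γ))]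
      congr 1
      · exact Finset.sum_congr rfl fun i hi => (if_pos hi).symm
      · rw [Finset.sum_congr rfl (fun i hi => if_neg (Finset.mem_compl.mp hi)),
          wb_coe_sum, Finset.sum_const, Finset.card_compl, Fintype.card_fin]
    have hKle : ∀ K : Finset (Fin n),
        (∑ i : Fin n, (if i ∈ K then B i i else (c : WithBot Γ)))
          ≤ ∑ i : Fin n, max (B i i) (c : WithBot Γ) := by
      intro K
      refine Finset.sum_le_sum fun i _ => ?_
      by_cases hiK : i ∈ K
      · rw [if_pos hiK]; exact le_max_left _ _
      · rw [if_neg hiK]; exact le_max_right _ _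
    have hiff : ∀ K : Finset (Fin n),
        (∑ i : Fin n, (if i ∈ K then B i i else (c : WithBot Γ)))
            = (∑ i : Fin n, max (B i i) (c : WithBot Γ)) ↔ (P ⊆ K ∧ K ⊆ P ∪ E) := by
      intro K
      constructor
      · intro heq
        have hne : ∀ i : Fin n, (if i ∈ K then B i i else (c : WithBot Γ)) ≠ ⊥ := by
          intro i hbi
          apply hM'ne
          rw [← heq]
          exact (wb_sum_eq_bot _ _).mpr ⟨i, Finset.mem_univ i, hbi⟩
        have hpt : ∀ i : Fin n,
            (if i ∈ K then B i i else (c : WithBot Γ)) = max (B i i) (c : WithBot Γ) := by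
          have hFle : ∀ i : Fin n,
              ((if i ∈ K then B i i else (c : WithBot Γ)).unbot (hne i))
                ≤ ((max (B i i) (c : WithBot Γ)).unbot (hmaxne i)) := by
            intro i
            rw [← WithBot.coe_le_coe, WithBot.coe_unbot, WithBot.coe_unbot]
            by_cases hiK : i ∈ K
            · rw [if_pos hiK]; exact le_max_left _ _
            · rw [if_neg hiK]; exact le_max_right _ _
          have hsum2 : (∑ i : Fin n, ((if i ∈ K then B i i else (c : WithBot Γ)).unbot (hne i)))
              = ∑ i : Fin n, ((max (B i i) (c : WithBot Γ)).unbot (hmaxne i)) := by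
            apply WithBot.coe_injective
            rw [← wb_coe_sum, ← wb_coe_sum]
            calc (∑ i : Fin n, (((if i ∈ K then B i i else (c : WithBot Γ)).unbot (hne i) : Γ)
                    : WithBot Γ))
                = ∑ i : Fin n, (if i ∈ K then B i i else (c : WithBot Γ)) :=
                  Finset.sum_congr rfl fun i _ => WithBot.coe_unbot _ _
              _ = ∑ i : Fin n, max (B i i) (c : WithBot Γ) := heq
              _ = ∑ i : Fin n, (((max (B i i) (c : WithBot Γ)).unbot (hmaxne i) : Γ)
                    : WithBot Γ) :=
                  (Finset.sum_congr rfl fun i _ => WithBot.coe_unbot _ _).symm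
          intro i
          have := (Finset.sum_eq_sum_iff_of_le (fun i _ => hFle i)).mp hsum2 i (Finset.mem_univ i)
          have hcoe := congrArg (fun y : Γ => (y : WithBot Γ)) this
          simpa [WithBot.coe_unbot] using hcoe
        constructor
        · intro a haP
          by_contra haK
          have hpa := hpt a
          rw [if_neg haK] at hpa
          have hle : B a a ≤ (c : WithBot Γ) := max_eq_right_iff.mp hpa.symm
          rw [hP] at haP
          exact absurd hle (not_le.mpr (Finset.mem_filter.mp haP).2)
        · intro a haK
          have hpa := hpt a
          rw [if_pos haK] at hpa
          have hle : (c : WithBot Γ) ≤ B a a := max_eq_left_iff.mp hpa.symm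
          rcases lt_or_eq_of_le hle with hlt | heq'
          · exact Finset.mem_union_left _ (by rw [hP]; exact Finset.mem_filter.mpr ⟨Finset.mem_univ a, hlt⟩)
          · exact Finset.mem_union_right _ (by rw [hE]; exact Finset.mem_filter.mpr ⟨Finset.mem_univ a, heq'.symm⟩)
      · rintro ⟨h1, h2⟩
        refine Finset.sum_congr rfl fun i _ => ?_
        by_cases hiK : i ∈ K
        · rw [if_pos hiK]
          have hle : (c : WithBot Γ) ≤ B i i := by
            rcases Finset.mem_union.mp (h2 hiK) with hiP | hiE
            · rw [hP] at hiP
              exact (Finset.mem_filter.mp hiP).2.le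
            · rw [hE] at hiE
              exact ((Finset.mem_filter.mp hiE).2).ge
          exact (max_eq_left hle).symm
        · rw [if_neg hiK]
          have hiP : i ∉ P := fun hiP => hiK (h1 hiP)
          rw [hP] at hiP
          have hle : B i i ≤ (c : WithBot Γ) := by
            by_contra hlt
            exact hiP (Finset.mem_filter.mpr ⟨Finset.mem_univ i, not_le.mp hlt⟩)
          exact (max_eq_right hle).symm
    -- the maximum of the polynomial
    have hgle : ∀ k : ℕ, k ≤ n → charCoeffT B k + ((k • c : Γ) : WithBot Γ)
        ≤ ∑ i : Fin n, max (B i i) (c : WithBot Γ) := by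
      intro k hk
      rcases hQat k hk with hbot | ⟨K, hK, heq⟩
      · rw [hbot, WithBot.bot_add]
        exact bot_le
      · have hKcard : K.card = n - k := (Finset.mem_powersetCard.mp hK).2
        have hnk : n - K.card = k := by omega
        rw [heq, show ((k • c : Γ) : WithBot Γ) = (((n - K.card) • c : Γ) : WithBot Γ) from
          by rw [hnk], hKval K]
        exact hKle K
    have hMattain : (∑ i : Fin n, max (B i i) (c : WithBot Γ))
        ≤ charCoeffT B (n - P.card) + (((n - P.card) • c : Γ) : WithBot Γ) := by
      have hPmem : P ∈ (Finset.univ : Finset (Fin n)).powersetCard (n - (n - P.card)) :=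
        Finset.mem_powersetCard.mpr ⟨Finset.subset_univ _, (Nat.sub_sub_self hpn).symm⟩
      have step1 : (∑ i : Fin n, max (B i i) (c : WithBot Γ))
          = (∑ i ∈ P, B i i) + (((n - P.card) • c : Γ) : WithBot Γ) := by
        rw [show (((n - P.card) • c : Γ) : WithBot Γ)
            = (((n - P.card) • c : Γ) : WithBot Γ) from rfl]
        rw [show ((n - P.card)) = (n - P.card) from rfl]
        rw [show (∑ i ∈ P, B i i) + (((n - P.card) • c : Γ) : WithBot Γ)
            = ∑ i : Fin n, (if i ∈ P then B i i else (c : WithBot Γ)) from hKval P,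
          (hiff P).mpr ⟨Finset.Subset.refl P, Finset.subset_union_left⟩]
      rw [step1]
      exact add_le_add_left (hQle (n - P.card) (Nat.sub_le n P.card) P hPmem) _
    have hMtot : sumT (List.range (n+1))
        (fun l => charCoeffT B l + ((l • c : Γ) : WithBot Γ))
          = ∑ i : Fin n, max (B i i) (c : WithBot Γ) := by
      refine le_antisymm (sumT_le fun k hk => hgle k (by
        have := List.mem_range.mp hk; omega)) ?_
      exact le_trans hMattain (le_sumT (fun l => charCoeffT B l + ((l • c : Γ) : WithBot Γ))
        (List.mem_range.mpr (show n - P.card < n + 1 by omega)))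
    have hS : {k | k ≤ n ∧ charCoeffT B k + ((k • c : Γ) : WithBot Γ)
            = sumT (List.range (n+1)) (fun l => charCoeffT B l + ((l • c : Γ) : WithBot Γ))}
        = Set.Icc (n - (P.card + E.card)) (n - P.card) := by
      ext k
      simp only [Set.mem_setOf_eq, Set.mem_Icc]
      rw [hMtot]
      constructor
      · rintro ⟨hkn, hgk⟩
        rcases hQat k hkn with hbot | ⟨K, hK, heq⟩
        · exfalso
          apply hM'ne
          rw [← hgk, hbot, WithBot.bot_add]
        · have hKcard : K.card = n - k := (Finset.mem_powersetCard.mp hK).2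
          have hnk : n - K.card = k := by omega
          have hKM : (∑ i : Fin n, (if i ∈ K then B i i else (c : WithBot Γ)))
              = ∑ i : Fin n, max (B i i) (c : WithBot Γ) := by
            rw [← hKval K, show (((n - K.card) • c : Γ) : WithBot Γ)
              = ((k • c : Γ) : WithBot Γ) from by rw [hnk], ← heq]
            exact hgk
          obtain ⟨hPK, hKPE⟩ := (hiff K).mp hKM
          have h1 := Finset.card_le_card hPK
          have h2 := Finset.card_le_card hKPE
          rw [hpq] at h2
          omega
      · rintro ⟨hk1, hk2⟩
        have hkn : k ≤ n := le_trans hk2 (Nat.sub_le n P.card)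
        obtain ⟨K, hPK, hKPE, hKcard'⟩ := Finset.exists_subsuperset_card_eq
          (Finset.subset_union_left (s₁ := P) (s₂ := E)) (show P.card ≤ n - k by omega)
          (by rw [hpq]; omega)
        have hKmem : K ∈ (Finset.univ : Finset (Fin n)).powersetCard (n - k) :=
          Finset.mem_powersetCard.mpr ⟨Finset.subset_univ _, hKcard'⟩
        refine ⟨hkn, le_antisymm (hgle k hkn) ?_⟩
        have hnk : n - K.card = k := by omega
        calc (∑ i : Fin n, max (B i i) (c : WithBot Γ))
            = ∑ i : Fin n, (if i ∈ K then B i i else (c : WithBot Γ)) :=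
              ((hiff K).mpr ⟨hPK, hKPE⟩).symm
          _ = (∑ i ∈ K, B i i) + ((k • c : Γ) : WithBot Γ) := by
              rw [← hKval K, show (((n - K.card) • c : Γ) : WithBot Γ)
                = ((k • c : Γ) : WithBot Γ) from by rw [hnk]]
          _ ≤ charCoeffT B k + ((k • c : Γ) : WithBot Γ) :=
              add_le_add_left (hQle k hkn K hKmem) _
    rw [hS, csSup_Icc (by omega), csInf_Icc (by omega)]
    omega

end Aux4

end TropPaper

namespace TropPaper

/-- for a TPSD matrix A, the multiset of 𝕋max-algebraic
eigenvalues of |A| (i.e. the multiplicity of every x ∈ 𝕋max as a root of the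
𝕋max-characteristic polynomial of |A|) equals the multiset of diagonal
entries of |A|. -/
theorem tmax_eigenvalues_of_tpsd {Γ : Type} [AddCommGroup Γ] [LinearOrder Γ] [IsOrderedAddMonoid Γ]
    [Nontrivial Γ] (hdiv : DivisibleGrp Γ) {n : ℕ}
    (A : Matrix (Fin n) (Fin n) (Smax Γ)) (hsym : SymmS A) (hsgn : MatSigned A)
    (hTPSD : TPSD A) :
    ∀ x : WithBot Γ,
      rootMultT n (charCoeffT (Matrix.of fun i j => smod (A i j))) x =
        (Finset.univ.filter (fun i : Fin n => smod (A i i) = x)).card := by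
  intro x
  have h := main_aux (Matrix.of fun i j => smod (A i j))
    (fun i j => diag_dominates hdiv A hsym hsgn hTPSD i j) x
  convert h <;> rfl

end TropPaper
end

section
/- Let A ∈ (𝕊max)^{n×n}, let γ ∈ 𝕊max^∨ be an 𝕊max-eigenvalue of A (i.e. det(γ⊙I ⊖ A) ∇ 𝟘), and set B = γ⊙I ⊖ A. Then A ⊙ B^adj ∇ γ ⊙ B^adj, where ∇ holds entrywise between the two matrices. -/
namespace TropPaper

section Alg

attribute [reducible] Smax

variable {Γ : Type} [AddCommGroup Γ] [LinearOrder Γ] [IsOrderedAddMonoid Γ]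

lemma sadd_none (b : Smax Γ) : sadd none b = b := rfl

lemma sadd_none' (a : Smax Γ) : sadd a none = a := by cases a <;> rfl

lemma sadd_lt {x y : Γ} {s t : SSign} (h : x < y) :
    sadd (some (x, s)) (some (y, t)) = some (y, t) := by
  simp [sadd, h]

lemma sadd_gt {x y : Γ} {s t : SSign} (h : y < x) :
    sadd (some (x, s)) (some (y, t)) = some (x, s) := by
  simp [sadd, h, lt_asymm h]

lemma sadd_eqm (x : Γ) (s t : SSign) :
    sadd (some (x, s)) (some (x, t)) = some (x, if s = t then s else SSign.bal) := by
  simp [sadd]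

lemma comb_assoc (s t u : SSign) :
    (if (if s = t then s else SSign.bal) = u then (if s = t then s else SSign.bal)
      else SSign.bal)
    = (if s = (if t = u then t else SSign.bal) then s else SSign.bal) := by
  cases s <;> cases t <;> cases u <;> rfl

lemma sadd_assoc (a b c : Smax Γ) : sadd (sadd a b) c = sadd a (sadd b c) := by
  obtain _ | ⟨x, s⟩ := a
  · rfl
  obtain _ | ⟨y, t⟩ := b
  · rfl
  obtain _ | ⟨z, u⟩ := c
  · rw [sadd_none', sadd_none']
  rcases lt_trichotomy x y with hxy | rfl | hxy
  · rcases lt_trichotomy y z with hyz | rfl | hyz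
    · simp only [sadd_lt hxy, sadd_lt hyz, sadd_lt (hxy.trans hyz)]
    · simp only [sadd_lt hxy, sadd_eqm]
    · simp only [sadd_lt hxy, sadd_gt hyz]
  · rcases lt_trichotomy x z with hyz | rfl | hyz
    · simp only [sadd_eqm, sadd_lt hyz]
    · simp only [sadd_eqm]
      exact congrArg _ (congrArg _ (comb_assoc s t u))
    · simp only [sadd_eqm, sadd_gt hyz]
  · rcases lt_trichotomy y z with hyz | rfl | hyz
    · rcases lt_trichotomy x z with hxz | rfl | hxz
      · simp only [sadd_gt hxy, sadd_lt hyz, sadd_lt hxz]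
      · simp only [sadd_gt hxy, sadd_lt hyz, sadd_eqm]
      · simp only [sadd_gt hxy, sadd_lt hyz, sadd_gt hxz]
    · simp only [sadd_eqm, sadd_gt hxy]
    · simp only [sadd_gt hxy, sadd_gt hyz, sadd_gt (hyz.trans hxy)]

lemma smul_somes (x y : Γ) (s t : SSign) :
    smul (some (x, s)) (some (y, t)) = some (x + y, sgnMul s t) := rfl

lemma smul_none (b : Smax Γ) : smul none b = none := rfl

lemma smul_none' (a : Smax Γ) : smul a none = none := by cases a <;> rfl

lemma sgnMul_comm (s t : SSign) : sgnMul s t = sgnMul t s := by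
  cases s <;> cases t <;> rfl

lemma sgnMul_assoc (s t u : SSign) :
    sgnMul (sgnMul s t) u = sgnMul s (sgnMul t u) := by
  cases s <;> cases t <;> cases u <;> rfl

lemma smul_comm' (a b : Smax Γ) : smul a b = smul b a := by
  obtain _ | ⟨x, s⟩ := a <;> obtain _ | ⟨y, t⟩ := b <;>
    simp [smul_somes, smul_none, smul_none', add_comm, sgnMul_comm]

lemma smul_assoc' (a b c : Smax Γ) : smul (smul a b) c = smul a (smul b c) := by
  obtain _ | ⟨x, s⟩ := a <;> obtain _ | ⟨y, t⟩ := b <;> obtain _ | ⟨z, u⟩ := c <;>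
    simp [smul_somes, smul_none, smul_none', add_assoc, sgnMul_assoc]

lemma one_smul' (a : Smax Γ) : smul sone a = a := by
  obtain _ | ⟨x, s⟩ := a
  · rfl
  · show some (0 + x, sgnMul SSign.pos s) = some (x, s)
    rw [zero_add]
    cases s <;> rfl

lemma comb_sgnMul (s t u : SSign) :
    sgnMul s (if t = u then t else SSign.bal)
      = if sgnMul s t = sgnMul s u then sgnMul s t else SSign.bal := by
  cases s <;> cases t <;> cases u <;> rfl

lemma smul_sadd (a b c : Smax Γ) :
    smul a (sadd b c) = sadd (smul a b) (smul a c) := by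
  obtain _ | ⟨x, s⟩ := a
  · rfl
  obtain _ | ⟨y, t⟩ := b
  · rfl
  obtain _ | ⟨z, u⟩ := c
  · rw [sadd_none', smul_none', sadd_none']
  rcases lt_trichotomy y z with h | rfl | h
  · simp only [sadd_lt h, smul_somes, sadd_lt (show x + y < x + z by gcongr)]
  · simp only [sadd_eqm, smul_somes, comb_sgnMul]
  · simp only [sadd_gt h, smul_somes, sadd_gt (show x + z < x + y by gcongr)]

lemma sadd_smul (a b c : Smax Γ) :
    smul (sadd a b) c = sadd (smul a c) (smul b c) := by
  rw [smul_comm' _ c, smul_sadd, smul_comm' c a, smul_comm' c b]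

instance : Zero (Smax Γ) := ⟨szero⟩
instance : Add (Smax Γ) := ⟨sadd⟩
instance : Mul (Smax Γ) := ⟨smul⟩
instance : One (Smax Γ) := ⟨sone⟩

instance : CommSemiring (Smax Γ) where
  add_assoc := sadd_assoc
  zero_add := sadd_none
  add_zero := sadd_none'
  add_comm := sadd_comm
  nsmul := nsmulRec
  mul_assoc := smul_assoc'
  one_mul := one_smul'
  mul_one := fun a => (smul_comm' _ _).trans (one_smul' a)
  mul_comm := smul_comm'
  left_distrib := smul_sadd
  right_distrib := sadd_smul
  zero_mul := smul_none
  mul_zero := smul_none'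
  npow := npowRec

lemma add_def (a b : Smax Γ) : a + b = sadd a b := rfl
lemma mul_def (a b : Smax Γ) : a * b = smul a b := rfl
lemma zero_def : (0 : Smax Γ) = szero := rfl
lemma one_def : (1 : Smax Γ) = sone := rfl

end Alg

end TropPaper
namespace TropPaper

section Det

variable {Γ : Type} [AddCommGroup Γ] [LinearOrder Γ] [IsOrderedAddMonoid Γ]

lemma sumS_eq_sum {α : Type} (s : Finset α) (f : α → Smax Γ) :
    sumS s.toList f = ∑ x ∈ s, f x := by
  rw [← Finset.sum_map_toList, List.sum_eq_foldr]; rfl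

lemma sumS_finRange {n : ℕ} (f : Fin n → Smax Γ) :
    sumS (List.finRange n) f = ∑ i, f i := by
  rw [Fin.sum_univ_def, List.sum_eq_foldr]; rfl

lemma prodS_finRange {n : ℕ} (f : Fin n → Smax Γ) :
    prodS (List.finRange n) f = ∏ i, f i := by
  rw [Fin.prod_univ_def, List.prod_eq_foldr]; rfl

lemma sneg_mul (a : Smax Γ) : sneg a = sneg 1 * a := by
  obtain _ | ⟨c, s⟩ := a
  · rfl
  · show sneg (some (c, s)) = smul (some ((0:Γ), SSign.neg)) (some (c, s))
    rw [smul_somes, zero_add]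
    cases s <;> rfl

lemma sneg_sneg (a : Smax Γ) : sneg (sneg a) = a := by
  obtain _ | ⟨c, s⟩ := a
  · rfl
  · cases s <;> rfl

lemma sneg_add (a b : Smax Γ) : sneg (a + b) = sneg a + sneg b := by
  rw [sneg_mul (a + b), mul_add, ← sneg_mul, ← sneg_mul]

lemma isBal_sneg {a : Smax Γ} : IsBal (sneg a) ↔ IsBal a := by
  obtain _ | ⟨c, s⟩ := a
  · exact Iff.rfl
  · cases s <;> simp [sneg, IsBal]

lemma e_mul_e : (sneg 1 : Smax Γ) * sneg 1 = 1 := by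
  show smul (some ((0:Γ), SSign.neg)) (some ((0:Γ), SSign.neg)) = sone
  rw [smul_somes, zero_add]; rfl

lemma e_pow_mul_self (k : ℕ) : (sneg 1 : Smax Γ) ^ k * (sneg 1) ^ k = 1 := by
  rw [← mul_pow, e_mul_e, one_pow]

lemma spow_eq (a : Smax Γ) (k : ℕ) : spow a k = a ^ k := by
  induction k with
  | zero => rfl
  | succ k ih =>
    show smul a (spow a k) = a ^ (k + 1)
    rw [← mul_def, ih, pow_succ, mul_comm]

lemma isBal_of_eq_neg {x : Smax Γ} (h : x = sneg 1 * x) : IsBal x := by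
  obtain _ | ⟨c, s⟩ := x
  · trivial
  · rw [show (sneg 1 : Smax Γ) = some ((0:Γ), SSign.neg) from rfl, mul_def, smul_somes,
      zero_add] at h
    cases s
    · exact absurd (congrArg (Option.map Prod.snd) h) (by simp [sgnMul])
    · exact absurd (congrArg (Option.map Prod.snd) h) (by simp [sgnMul])
    · rfl

/-- map from ℤˣ signs to 𝕊max signs -/
def sgnF (u : ℤˣ) : Smax Γ := if u = 1 then 1 else sneg 1

lemma sgnF_mul (u v : ℤˣ) : (sgnF (u * v) : Smax Γ) = sgnF u * sgnF v := by
  rcases Int.units_eq_one_or u with rfl | rfl <;>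
    rcases Int.units_eq_one_or v with rfl | rfl <;>
      simp [sgnF, e_mul_e]

lemma sgnF_neg_one : (sgnF (-1) : Smax Γ) = sneg 1 := by
  simp [sgnF]

lemma sgnF_neg_one_pow (k : ℕ) : (sgnF ((-1) ^ k) : Smax Γ) = (sneg 1) ^ k := by
  induction k with
  | zero => simp [sgnF]
  | succ k ih => rw [pow_succ, sgnF_mul, ih, sgnF_neg_one, pow_succ]

lemma permSignS_eq {n : ℕ} (π : Equiv.Perm (Fin n)) :
    (permSignS π : Smax Γ) = sgnF (Equiv.Perm.sign π) := by
  unfold permSignS sgnF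
  rcases Int.units_eq_one_or (Equiv.Perm.sign π) with h | h <;> rw [h] <;> simp <;> rfl

lemma permSignS_mul {n : ℕ} (π σ : Equiv.Perm (Fin n)) :
    (permSignS (π * σ) : Smax Γ) = permSignS π * permSignS σ := by
  rw [permSignS_eq, permSignS_eq, permSignS_eq, Equiv.Perm.sign_mul, sgnF_mul]

lemma permSignS_swap {n : ℕ} {i j : Fin n} (h : i ≠ j) :
    (permSignS (Equiv.swap i j) : Smax Γ) = sneg 1 := by
  rw [permSignS_eq, Equiv.Perm.sign_swap h, sgnF_neg_one]

lemma permSignS_one {n : ℕ} : (permSignS (1 : Equiv.Perm (Fin n)) : Smax Γ) = 1 := by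
  rw [permSignS_eq]; simp [sgnF]

lemma detS_eq {n : ℕ} (M : Matrix (Fin n) (Fin n) (Smax Γ)) :
    detS M = ∑ π : Equiv.Perm (Fin n), permSignS π * ∏ i, M i (π i) := by
  unfold detS
  rw [sumS_eq_sum]
  refine Finset.sum_congr rfl fun π _ => ?_
  rw [prodS_finRange]; rfl

lemma detS_permute {n : ℕ} (σ : Equiv.Perm (Fin n)) (M : Matrix (Fin n) (Fin n) (Smax Γ)) :
    detS (Matrix.of fun a b => M (σ a) b) = permSignS σ * detS M := by
  rw [detS_eq, detS_eq, Finset.mul_sum]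
  rw [← Equiv.sum_comp (Equiv.mulRight σ)
    (fun π => (permSignS π : Smax Γ) * ∏ a, (Matrix.of fun a b => M (σ a) b) a (π a))]
  refine Finset.sum_congr rfl fun τ _ => ?_
  simp only [Equiv.coe_mulRight, Matrix.of_apply, Equiv.Perm.mul_apply]
  rw [permSignS_mul, Equiv.prod_comp σ (fun x => M x (τ x))]
  ring

end Det

end TropPaper
namespace TropPaper

section Det2

variable {Γ : Type} [AddCommGroup Γ] [LinearOrder Γ] [IsOrderedAddMonoid Γ]

lemma permSignS_cycleRange {n : ℕ} (i : Fin n) :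
    (permSignS i.cycleRange : Smax Γ) = (sneg 1) ^ (i : ℕ) := by
  rw [permSignS_eq, Fin.sign_cycleRange, sgnF_neg_one_pow]

lemma permSignS_decomposeFin {n : ℕ} (p : Fin (n + 1)) (σ : Equiv.Perm (Fin n)) :
    (permSignS (Equiv.Perm.decomposeFin.symm (p, σ)) : Smax Γ)
      = (if p = 0 then 1 else sneg 1) * permSignS σ := by
  rw [permSignS_eq, Equiv.Perm.decomposeFin.symm_sign, sgnF_mul, permSignS_eq]
  congr 1
  split <;> simp [sgnF]

lemma detS_succ_row_zero {n : ℕ} (A : Matrix (Fin (n + 1)) (Fin (n + 1)) (Smax Γ)) :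
    detS A = ∑ p : Fin (n + 1), (sneg 1) ^ (p : ℕ) * A 0 p *
      detS (Matrix.of fun a b : Fin n => A a.succ (p.succAbove b)) := by
  rw [detS_eq, Finset.univ_perm_fin_succ, ← Finset.univ_product_univ, Finset.sum_map,
    Finset.sum_product]
  simp only [Equiv.toEmbedding_apply]
  refine Finset.sum_congr rfl fun p _ => ?_
  rw [detS_eq (Matrix.of fun a b : Fin n => A a.succ (p.succAbove b))]
  cases p using Fin.cases with
  | zero =>
    conv_rhs => rw [Finset.mul_sum]
    refine Finset.sum_congr rfl fun σ _ => ?_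
    rw [permSignS_decomposeFin, if_pos rfl, one_mul, Fin.prod_univ_succ,
      Equiv.Perm.decomposeFin_symm_apply_zero]
    simp only [Equiv.Perm.decomposeFin_symm_apply_succ, Equiv.swap_self,
      Equiv.refl_apply, Matrix.of_apply, Fin.succAbove_zero, Fin.val_zero, pow_zero]
    ring
  | succ i =>
    have he : (sneg 1 : Smax Γ) ^ ((i : ℕ) + 1) * ((sneg 1 : Smax Γ) ^ (i : ℕ)) = sneg 1 := by
      rw [pow_succ, mul_right_comm, e_pow_mul_self, one_mul]
    have hg : (∑ σ : Equiv.Perm (Fin n),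
          (permSignS (Equiv.Perm.decomposeFin.symm (i.succ, σ)) : Smax Γ) *
            ∏ a, A a (Equiv.Perm.decomposeFin.symm (i.succ, σ) a))
        = ∑ σ : Equiv.Perm (Fin n),
            (sneg 1 : Smax Γ) ^ ((i : ℕ) + 1) * permSignS (i.cycleRange * σ) *
              (A 0 i.succ * ∏ b, A b.succ (i.succ.succAbove ((i.cycleRange * σ) b))) := by
      refine Finset.sum_congr rfl fun σ _ => ?_
      rw [permSignS_decomposeFin, if_neg (Fin.succ_ne_zero i), Fin.prod_univ_succ,
        Equiv.Perm.decomposeFin_symm_apply_zero, permSignS_mul, permSignS_cycleRange]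
      simp only [Equiv.Perm.decomposeFin_symm_apply_succ, Equiv.Perm.mul_apply,
        ← Fin.succAbove_cycleRange]
      rw [← mul_assoc ((sneg 1 : Smax Γ) ^ ((i : ℕ) + 1)), he]
    rw [hg]
    have hc := Equiv.sum_comp (Equiv.mulLeft i.cycleRange)
      (fun τ : Equiv.Perm (Fin n) =>
        (sneg 1 : Smax Γ) ^ ((i : ℕ) + 1) * permSignS τ *
          (A 0 i.succ * ∏ b, A b.succ (i.succ.succAbove (τ b))))
    simp only [Equiv.coe_mulLeft] at hc
    rw [hc]
    conv_rhs => rw [Finset.mul_sum]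
    refine Finset.sum_congr rfl fun τ _ => ?_
    simp only [Matrix.of_apply, Fin.val_succ]
    ring

lemma detS_succ_row {n : ℕ} (A : Matrix (Fin (n + 1)) (Fin (n + 1)) (Smax Γ)) (i : Fin (n + 1)) :
    detS A = ∑ j : Fin (n + 1), (sneg 1) ^ ((i : ℕ) + (j : ℕ)) * A i j *
      detS (Matrix.of fun a b : Fin n => A (i.succAbove a) (j.succAbove b)) := by
  have hsgn : (permSignS i.cycleRange⁻¹ : Smax Γ) = (sneg 1) ^ (i : ℕ) := by
    rw [permSignS_eq, Equiv.Perm.sign_inv, Fin.sign_cycleRange, sgnF_neg_one_pow]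
  have hperm := detS_permute (i.cycleRange⁻¹) A
  rw [hsgn] at hperm
  have h0 : detS A = (sneg 1 : Smax Γ) ^ (i : ℕ) *
      detS (Matrix.of fun a b => A (i.cycleRange⁻¹ a) b) := by
    rw [hperm, ← mul_assoc, e_pow_mul_self, one_mul]
  rw [h0, detS_succ_row_zero (Matrix.of fun a b => A (i.cycleRange⁻¹ a) b), Finset.mul_sum]
  refine Finset.sum_congr rfl fun j _ => ?_
  have hz : (i.cycleRange⁻¹ : Equiv.Perm (Fin (n+1))) 0 = i := by
    rw [Equiv.Perm.inv_def, Fin.cycleRange_symm_zero]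
  have hs : ∀ a : Fin n, (i.cycleRange⁻¹ : Equiv.Perm (Fin (n+1))) a.succ = i.succAbove a := by
    intro a
    rw [Equiv.Perm.inv_def, Fin.cycleRange_symm_succ]
  simp only [Matrix.of_apply, hz, hs, pow_add]
  ring

lemma detS_two_rows_eq {n : ℕ} (N : Matrix (Fin n) (Fin n) (Smax Γ)) {i j : Fin n}
    (hij : i ≠ j) (hrows : ∀ b, N i b = N j b) : IsBal (detS N) := by
  have hNs : ∀ a b, N ((Equiv.swap i j) a) b = N a b := by
    intro a b
    rcases eq_or_ne a i with rfl | hai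
    · rw [Equiv.swap_apply_left]; exact (hrows b).symm
    rcases eq_or_ne a j with rfl | haj
    · rw [Equiv.swap_apply_right]; exact hrows b
    · rw [Equiv.swap_apply_of_ne_of_ne hai haj]
  refine isBal_of_eq_neg ?_
  rw [detS_eq, Finset.mul_sum]
  have hc := Equiv.sum_comp (Equiv.mulRight (Equiv.swap i j))
    (fun π : Equiv.Perm (Fin n) => (permSignS π : Smax Γ) * ∏ a, N a (π a))
  simp only [Equiv.coe_mulRight] at hc
  rw [← hc]
  refine Finset.sum_congr rfl fun π _ => ?_
  rw [permSignS_mul, permSignS_swap hij]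
  have hprod : ∏ a, N a ((π * Equiv.swap i j) a) = ∏ a, N a (π a) := by
    have h1 := Equiv.prod_comp (Equiv.swap i j) (fun a => N ((Equiv.swap i j) a) (π a))
    simp only [Equiv.swap_apply_self, hNs] at h1
    simpa only [Equiv.Perm.mul_apply] using h1
  rw [hprod]
  ring

end Det2

end TropPaper
namespace TropPaper

section Main

variable {Γ : Type} [AddCommGroup Γ] [LinearOrder Γ] [IsOrderedAddMonoid Γ]

lemma matMul_adj_eq_det_rowrep {n : ℕ} (B : Matrix (Fin (n + 1)) (Fin (n + 1)) (Smax Γ))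
    (i j : Fin (n + 1)) :
    matMulS B (adjS B) i j
      = detS (Matrix.of fun a b => if a = j then B i b else B a b) := by
  have hmm : matMulS B (adjS B) i j = ∑ l, B i l * adjS B l j := by
    show sumS (List.finRange (n + 1)) _ = _
    rw [sumS_finRange]
    rfl
  rw [hmm, detS_succ_row _ j]
  refine Finset.sum_congr rfl fun l _ => ?_
  have hadj : adjS B l j = (sneg 1 : Smax Γ) ^ ((l : ℕ) + (j : ℕ)) *
      detS (Matrix.of fun a b : Fin n => B (j.succAbove a) (l.succAbove b)) := by
    show smul (spow (sneg sone) ((l : ℕ) + (j : ℕ))) _ = _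
    rw [← mul_def, spow_eq]
    rfl
  have hdets : detS (Matrix.of fun a b : Fin n =>
        (Matrix.of fun a b => if a = j then B i b else B a b) (j.succAbove a) (l.succAbove b))
      = detS (Matrix.of fun a b : Fin n => B (j.succAbove a) (l.succAbove b)) := by
    congr 1
    ext a b
    simp only [Matrix.of_apply, if_neg (Fin.succAbove_ne j a)]
  have hjl : (Matrix.of fun a b => if a = j then B i b else B a b) j l = B i l := by
    simp only [Matrix.of_apply, if_pos rfl, if_true]
  rw [hadj, hdets, hjl, Nat.add_comm (j : ℕ) (l : ℕ)]
  ring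

/-- if γ is an 𝕊max-eigenvalue of A and B = γ⊙I ⊖ A, then
A ⊙ B^adj ∇ γ ⊙ B^adj entrywise. -/
theorem adjugate_balance {Γ : Type} [AddCommGroup Γ] [LinearOrder Γ] [IsOrderedAddMonoid Γ] [Nontrivial Γ]
    (hdiv : DivisibleGrp Γ) {n : ℕ}
    (A : Matrix (Fin (n+1)) (Fin (n+1)) (Smax Γ)) (γ : Smax Γ) (hγ : IsSigned γ)
    (heig : IsBal (detS (charMatS γ A))) :
    ∀ i j, Balance (matMulS A (adjS (charMatS γ A)) i j)
      (smul γ (adjS (charMatS γ A) i j)) := by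
  intro i j
  set B : Matrix (Fin (n+1)) (Fin (n+1)) (Smax Γ) := charMatS γ A with hB
  set adjB : Matrix (Fin (n+1)) (Fin (n+1)) (Smax Γ) := adjS B with hadjB
  -- Step 1: (B ⬝ adjB) i j is balanced
  have h1 : IsBal (matMulS B adjB i j) := by
    rw [matMul_adj_eq_det_rowrep]
    rcases eq_or_ne i j with rfl | hij
    · have hN : (Matrix.of fun a b => if a = i then B i b else B a b) = B := by
        ext a b
        simp only [Matrix.of_apply]
        split
        · subst ‹a = i›; rfl
        · rfl
      rw [hN]
      exact heig
    · refine detS_two_rows_eq _ hij fun b => ?_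
      simp only [Matrix.of_apply, if_pos rfl, if_neg hij, if_true]
  -- Step 2: (B ⬝ adjB) i j = γ * adjB i j + ⊖ (A ⬝ adjB) i j
  have hAix : matMulS A adjB i j = ∑ l, A i l * adjB l j := by
    show sumS (List.finRange (n + 1)) _ = _
    rw [sumS_finRange]; rfl
  have h2 : matMulS B adjB i j = smul γ (adjB i j) + sneg (matMulS A adjB i j) := by
    have hmm : matMulS B adjB i j = ∑ l, B i l * adjB l j := by
      show sumS (List.finRange (n + 1)) _ = _
      rw [sumS_finRange]; rfl
    have hBil : ∀ l, B i l = smul γ (idMatS i l) + sneg (A i l) := fun l => rfl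
    rw [hmm]
    calc ∑ l, B i l * adjB l j
        = ∑ l, (smul γ (idMatS i l) * adjB l j + sneg (A i l) * adjB l j) := by
          refine Finset.sum_congr rfl fun l _ => ?_
          rw [hBil l, add_mul]
      _ = (∑ l, smul γ (idMatS i l) * adjB l j) + ∑ l, sneg (A i l) * adjB l j :=
          Finset.sum_add_distrib
      _ = smul γ (adjB i j) + sneg (matMulS A adjB i j) := by
          congr 1
          · calc ∑ l, smul γ (idMatS i l) * adjB l j
                = ∑ l, (if i = l then γ * adjB l j else 0) := by
                  refine Finset.sum_congr rfl fun l _ => ?_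
                  show (γ * idMatS i l) * adjB l j = _
                  simp only [idMatS, Matrix.of_apply]
                  split
                  · rw [← one_def, mul_one]
                  · rw [← zero_def, mul_zero, zero_mul]
              _ = γ * adjB i j := by rw [Finset.sum_ite_eq]; simp
              _ = smul γ (adjB i j) := rfl
          · rw [hAix, sneg_mul, Finset.mul_sum]
            refine Finset.sum_congr rfl fun l _ => ?_
            rw [sneg_mul (A i l), mul_assoc]
  -- Conclusion
  show IsBal (ssub (matMulS A adjB i j) (smul γ (adjB i j)))
  have hsub : ssub (matMulS A adjB i j) (smul γ (adjB i j))
      = sneg (matMulS B adjB i j) := by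
    show matMulS A adjB i j + sneg (smul γ (adjB i j)) = _
    rw [h2, sneg_add, sneg_sneg, add_comm]
  rw [hsub]
  exact isBal_sneg.mpr h1

end Main

end TropPaper
end
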